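/- Let σ > 0 and τ ∈ (0,1), and define f(τ) = (τ/(1−τ²)) ( √(1−τ²)/arctan(√(1−τ²)/τ) − τ ). Then for every y > 0: T_τ(y) ≤ y · exp(y²/(2σ²)) · f(τ), and moreover f(τ) < (2/3) · τ/(1+τ) ≤ (2/3) τ, so in particular T_τ(y) ≤ (2/3) τ y exp(y²/(2σ²)). -/

import Mathlib

open MeasureTheory ProbabilityTheory Real Filter Set

/-- The integral `I_k(y) = ∫₀¹ z^k (τ² + (1−τ²)z)⁻¹ exp(y² z/(2σ²)) dz`. -/
noncomputable def hsI (σ τ k y : ℝ) : ℝ :=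
  ∫ z in (0:ℝ)..1, z ^ k * (τ ^ 2 + (1 - τ ^ 2) * z)⁻¹ * Real.exp (y ^ 2 * z / (2 * σ ^ 2))

/-- The horseshoe estimator `T_τ(y) = y · I_{1/2}(y)/I_{−1/2}(y)`. -/
noncomputable def hsT (σ τ y : ℝ) : ℝ :=
  y * hsI σ τ (1/2) y / hsI σ τ (-(1/2)) y

/-- The horseshoe posterior variance
`V_τ(y) = σ² I_{1/2}/I_{−1/2} + y² (I_{3/2}/I_{−1/2} − (I_{1/2}/I_{−1/2})²)`. -/
noncomputable def hsV (σ τ y : ℝ) : ℝ :=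
  σ ^ 2 * (hsI σ τ (1/2) y / hsI σ τ (-(1/2)) y)
    + y ^ 2 * (hsI σ τ (3/2) y / hsI σ τ (-(1/2)) y
        - (hsI σ τ (1/2) y / hsI σ τ (-(1/2)) y) ^ 2)

/-- The law of `Y` with independent coordinates `Y_i ~ N(θ i, σ²)`. -/
noncomputable def gaussPi (σ : ℝ) {n : ℕ} (θ : Fin n → ℝ) : Measure (Fin n → ℝ) :=
  Measure.pi fun i => gaussianReal (θ i) (Real.toNNReal (σ ^ 2))

/-- `θ` is nearly black: at most `p` nonzero coordinates. -/
def nearlyBlack {n : ℕ} (θ : Fin n → ℝ) (p : ℕ) : Prop :=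
  {i | θ i ≠ 0}.ncard ≤ p

/-- The horseshoe prior density on ℝ. -/
noncomputable def hsPriorDensity (σ τ t : ℝ) : ℝ :=
  ∫ l in Set.Ioi (0:ℝ),
    (2 / (π * (1 + l ^ 2))) * (σ * τ * l * Real.sqrt (2 * π))⁻¹ *
      Real.exp (-(t ^ 2) / (2 * σ ^ 2 * τ ^ 2 * l ^ 2))

/-- The horseshoe posterior mass of a set `A` given data `y`. -/
noncomputable def hsPost (σ τ : ℝ) {n : ℕ} (y : Fin n → ℝ) (A : Set (Fin n → ℝ)) : ℝ :=
  (∫ θ in A, (∏ i, hsPriorDensity σ τ (θ i)) *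
      Real.exp (-(∑ i, (y i - θ i) ^ 2) / (2 * σ ^ 2))) /
  ∫ θ : Fin n → ℝ, (∏ i, hsPriorDensity σ τ (θ i)) *
      Real.exp (-(∑ i, (y i - θ i) ^ 2) / (2 * σ ^ 2))

lemma hsI_intble (σ τ k y : ℝ) (hσ : 0 < σ) (hτ0 : 0 < τ) (hτ1 : τ < 1) (hk : (-1:ℝ) < k) :
    IntervalIntegrable
      (fun z => z ^ k * (τ ^ 2 + (1 - τ ^ 2) * z)⁻¹ * Real.exp (y ^ 2 * z / (2 * σ ^ 2)))
      volume 0 1 := by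
  have hτ2 : (0:ℝ) < τ ^ 2 := by positivity
  rw [intervalIntegrable_iff_integrableOn_Ioc_of_le (by norm_num)]
  have hg : IntegrableOn (fun z : ℝ => z ^ k * ((τ ^ 2)⁻¹ * Real.exp (y ^ 2 / (2 * σ ^ 2))))
      (Set.Ioc (0:ℝ) 1) volume := by
    have := (intervalIntegral.intervalIntegrable_rpow' (a := 0) (b := 1) hk).mul_const
      ((τ ^ 2)⁻¹ * Real.exp (y ^ 2 / (2 * σ ^ 2)))
    rw [intervalIntegrable_iff_integrableOn_Ioc_of_le (by norm_num)] at this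
    simpa [mul_assoc] using this
  refine hg.mono' ?_ ?_
  · apply Measurable.aestronglyMeasurable
    fun_prop
  · filter_upwards [ae_restrict_mem measurableSet_Ioc] with z hz
    have hz0 : 0 < z := hz.1
    have hz1 : z ≤ 1 := hz.2
    have hτsq : τ ^ 2 < 1 := by nlinarith
    have hD : τ ^ 2 ≤ τ ^ 2 + (1 - τ ^ 2) * z := by nlinarith [mul_nonneg (by linarith : (0:ℝ) ≤ 1 - τ ^ 2) hz0.le]
    have h1 : (τ ^ 2 + (1 - τ ^ 2) * z)⁻¹ ≤ (τ ^ 2)⁻¹ :=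
      inv_anti₀ hτ2 hD
    have h2 : Real.exp (y ^ 2 * z / (2 * σ ^ 2)) ≤ Real.exp (y ^ 2 / (2 * σ ^ 2)) := by
      apply Real.exp_le_exp.2
      rw [div_le_div_iff₀ (by positivity) (by positivity)]
      nlinarith [mul_nonneg (mul_nonneg (sq_nonneg y) (by linarith : (0:ℝ) ≤ 1 - z)) (by positivity : (0:ℝ) ≤ 2 * σ ^ 2)]
    have hzk : (0:ℝ) ≤ z ^ k := Real.rpow_nonneg hz0.le k
    have hDnn : (0:ℝ) ≤ (τ ^ 2 + (1 - τ ^ 2) * z)⁻¹ := inv_nonneg.2 (by linarith)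
    rw [Real.norm_eq_abs, abs_of_nonneg (mul_nonneg (mul_nonneg hzk hDnn) (Real.exp_nonneg _))]
    calc z ^ k * (τ ^ 2 + (1 - τ ^ 2) * z)⁻¹ * Real.exp (y ^ 2 * z / (2 * σ ^ 2))
        ≤ z ^ k * (τ ^ 2)⁻¹ * Real.exp (y ^ 2 / (2 * σ ^ 2)) := by
          exact mul_le_mul (mul_le_mul_of_nonneg_left h1 hzk) h2 (Real.exp_nonneg _)
            (mul_nonneg hzk (by positivity))
      _ = z ^ k * ((τ ^ 2)⁻¹ * Real.exp (y ^ 2 / (2 * σ ^ 2))) := by ring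

lemma hsI_zero_neg (σ τ : ℝ) (hσ : 0 < σ) (hτ0 : 0 < τ) (hτ1 : τ < 1) :
    hsI σ τ (-(1/2)) 0 =
      2 / (τ * Real.sqrt (1 - τ ^ 2)) * Real.arctan (Real.sqrt (1 - τ ^ 2) / τ) := by
  have hs2 : (0:ℝ) < 1 - τ ^ 2 := by nlinarith
  set s := Real.sqrt (1 - τ ^ 2) with hs
  have hs0 : 0 < s := Real.sqrt_pos.2 hs2
  have hssq : s ^ 2 = 1 - τ ^ 2 := Real.sq_sqrt hs2.le
  set F : ℝ → ℝ := fun z => 2 / (τ * s) * Real.arctan (s * Real.sqrt z / τ) with hF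
  have hFc : Continuous F := by
    apply continuous_const.mul
    exact Real.continuous_arctan.comp (((continuous_const.mul Real.continuous_sqrt).div_const τ))
  have hderiv : ∀ x ∈ Set.Ioo (0:ℝ) 1, HasDerivAt F
      (x ^ (-(1/2):ℝ) * (τ ^ 2 + (1 - τ ^ 2) * x)⁻¹ * Real.exp (0 ^ 2 * x / (2 * σ ^ 2))) x := by
    intro x hx
    have hx0 : 0 < x := hx.1
    have hsx : 0 < Real.sqrt x := Real.sqrt_pos.2 hx0
    have hsq : Real.sqrt x ^ 2 = x := Real.sq_sqrt hx0.le
    have h1 : HasDerivAt (fun z : ℝ => s * Real.sqrt z / τ)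
        (s * (1 / (2 * Real.sqrt x)) / τ) x :=
      ((Real.hasDerivAt_sqrt hx0.ne').const_mul s).div_const τ
    have h2 : HasDerivAt F
        (2 / (τ * s) * ((1 / (1 + (s * Real.sqrt x / τ) ^ 2)) * (s * (1 / (2 * Real.sqrt x)) / τ))) x :=
      ((Real.hasDerivAt_arctan (s * Real.sqrt x / τ)).comp x h1).const_mul (2 / (τ * s))
    convert h2 using 1
    have hxk : x ^ (-(1/2):ℝ) = (Real.sqrt x)⁻¹ := by
      rw [Real.rpow_neg hx0.le, Real.sqrt_eq_rpow]
    rw [hxk]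
    have hDpos : 0 < τ ^ 2 + (1 - τ ^ 2) * x := by positivity
    have hd : 1 + (s * Real.sqrt x / τ) ^ 2 = (τ ^ 2 + (1 - τ ^ 2) * x) / τ ^ 2 := by
      field_simp
      nlinarith [hssq, hsq]
    rw [hd]
    norm_num
    field_simp
  have hint := hsI_intble σ τ (-(1/2)) 0 hσ hτ0 hτ1 (by norm_num)
  have key := intervalIntegral.integral_eq_sub_of_hasDerivAt_of_tendsto (a := 0) (b := 1)
    (by norm_num) hderiv hint
    ((hFc.tendsto 0).mono_left nhdsWithin_le_nhds)
    ((hFc.tendsto 1).mono_left nhdsWithin_le_nhds)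
  rw [hsI, key, hF]
  simp [Real.sqrt_one]

lemma hsI_zero_pos (σ τ : ℝ) (hσ : 0 < σ) (hτ0 : 0 < τ) (hτ1 : τ < 1) :
    hsI σ τ (1/2) 0 =
      2 / (1 - τ ^ 2) *
        (1 - τ / Real.sqrt (1 - τ ^ 2) * Real.arctan (Real.sqrt (1 - τ ^ 2) / τ)) := by
  have hs2 : (0:ℝ) < 1 - τ ^ 2 := by nlinarith
  set s := Real.sqrt (1 - τ ^ 2) with hs
  have hs0 : 0 < s := Real.sqrt_pos.2 hs2
  have hssq : s ^ 2 = 1 - τ ^ 2 := Real.sq_sqrt hs2.le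
  set F : ℝ → ℝ := fun z => 2 / (1 - τ ^ 2) *
    (Real.sqrt z - τ / s * Real.arctan (s * Real.sqrt z / τ)) with hF
  have hFc : Continuous F := by
    apply continuous_const.mul
    exact Real.continuous_sqrt.sub (continuous_const.mul
      (Real.continuous_arctan.comp ((continuous_const.mul Real.continuous_sqrt).div_const τ)))
  have hderiv : ∀ x ∈ Set.Ioo (0:ℝ) 1, HasDerivAt F
      (x ^ ((1/2):ℝ) * (τ ^ 2 + (1 - τ ^ 2) * x)⁻¹ * Real.exp (0 ^ 2 * x / (2 * σ ^ 2))) x := by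
    intro x hx
    have hx0 : 0 < x := hx.1
    have hsx : 0 < Real.sqrt x := Real.sqrt_pos.2 hx0
    have hsq : Real.sqrt x ^ 2 = x := Real.sq_sqrt hx0.le
    have h1 : HasDerivAt (fun z : ℝ => s * Real.sqrt z / τ)
        (s * (1 / (2 * Real.sqrt x)) / τ) x :=
      ((Real.hasDerivAt_sqrt hx0.ne').const_mul s).div_const τ
    have h2 : HasDerivAt F
        (2 / (1 - τ ^ 2) * ((1 / (2 * Real.sqrt x)) -
          τ / s * ((1 / (1 + (s * Real.sqrt x / τ) ^ 2)) * (s * (1 / (2 * Real.sqrt x)) / τ)))) x :=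
      (((Real.hasDerivAt_sqrt hx0.ne').sub
        (((Real.hasDerivAt_arctan (s * Real.sqrt x / τ)).comp x h1).const_mul (τ / s))).const_mul
          (2 / (1 - τ ^ 2)))
    convert h2 using 1
    have hxk : x ^ ((1/2):ℝ) = Real.sqrt x := (Real.sqrt_eq_rpow x).symm
    rw [hxk]
    have hDpos : 0 < τ ^ 2 + (1 - τ ^ 2) * x := by positivity
    have hd : 1 + (s * Real.sqrt x / τ) ^ 2 = (τ ^ 2 + (1 - τ ^ 2) * x) / τ ^ 2 := by
      field_simp
      nlinarith [hssq, hsq]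
    rw [hd]
    norm_num
    set u := Real.sqrt x with hu
    rw [show x = u ^ 2 from hsq.symm]
    have hD' : (0:ℝ) < τ ^ 2 + (1 - τ ^ 2) * u ^ 2 := by positivity
    field_simp
    ring
  have hint := hsI_intble σ τ (1/2) 0 hσ hτ0 hτ1 (by norm_num)
  have key := intervalIntegral.integral_eq_sub_of_hasDerivAt_of_tendsto (a := 0) (b := 1)
    (by norm_num) hderiv hint
    ((hFc.tendsto 0).mono_left nhdsWithin_le_nhds)
    ((hFc.tendsto 1).mono_left nhdsWithin_le_nhds)
  rw [hsI, key, hF]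
  simp [Real.sqrt_one]

lemma shafer_trig {θ : ℝ} (h0 : 0 < θ) (h1 : θ < π / 2) :
    3 * Real.sin θ < θ * (2 + Real.cos θ) := by
  have hpi := Real.pi_pos
  have d2 : ∀ x : ℝ, HasDerivAt (fun t => Real.sin t - t * Real.cos t) (x * Real.sin x) x := by
    intro x
    have := (Real.hasDerivAt_sin x).sub ((hasDerivAt_id x).mul (Real.hasDerivAt_cos x))
    refine this.congr_deriv ?_; simp only [id_eq]; ring
  have m2 : StrictMonoOn (fun t => Real.sin t - t * Real.cos t) (Set.Icc 0 (π/2)) := by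
    apply strictMonoOn_of_deriv_pos (convex_Icc _ _)
    · fun_prop
    · intro x hx
      rw [interior_Icc] at hx
      rw [(d2 x).deriv]
      have : 0 < Real.sin x := Real.sin_pos_of_pos_of_lt_pi hx.1 (by linarith [hx.2])
      exact mul_pos hx.1 this
  have p2 : ∀ x ∈ Set.Ioo (0:ℝ) (π/2), 0 < Real.sin x - x * Real.cos x := by
    intro x hx
    have := m2 (Set.left_mem_Icc.2 (by linarith)) ⟨hx.1.le, hx.2.le⟩ hx.1
    simpa using this
  have d1 : ∀ x : ℝ, HasDerivAt (fun t => 2 - 2 * Real.cos t - t * Real.sin t)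
      (Real.sin x - x * Real.cos x) x := by
    intro x
    have := ((hasDerivAt_const x (2:ℝ)).sub ((Real.hasDerivAt_cos x).const_mul 2)).sub
      ((hasDerivAt_id x).mul (Real.hasDerivAt_sin x))
    refine this.congr_deriv ?_; simp only [id_eq]; ring
  have m1 : StrictMonoOn (fun t => 2 - 2 * Real.cos t - t * Real.sin t) (Set.Icc 0 (π/2)) := by
    apply strictMonoOn_of_deriv_pos (convex_Icc _ _)
    · fun_prop
    · intro x hx
      rw [interior_Icc] at hx
      rw [(d1 x).deriv]
      exact p2 x hx
  have p1 : ∀ x ∈ Set.Ioo (0:ℝ) (π/2), 0 < 2 - 2 * Real.cos x - x * Real.sin x := by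
    intro x hx
    have := m1 (Set.left_mem_Icc.2 (by linarith)) ⟨hx.1.le, hx.2.le⟩ hx.1
    simpa using this
  have d0 : ∀ x : ℝ, HasDerivAt (fun t => t * (2 + Real.cos t) - 3 * Real.sin t)
      (2 - 2 * Real.cos x - x * Real.sin x) x := by
    intro x
    have := ((hasDerivAt_id x).mul ((hasDerivAt_const x (2:ℝ)).add (Real.hasDerivAt_cos x))).sub
      ((Real.hasDerivAt_sin x).const_mul 3)
    refine this.congr_deriv ?_; simp only [id_eq, Pi.add_apply]; ring
  have m0 : StrictMonoOn (fun t => t * (2 + Real.cos t) - 3 * Real.sin t) (Set.Icc 0 (π/2)) := by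
    apply strictMonoOn_of_deriv_pos (convex_Icc _ _)
    · fun_prop
    · intro x hx
      rw [interior_Icc] at hx
      rw [(d0 x).deriv]
      exact p1 x ⟨hx.1, hx.2⟩
  have := m0 (Set.left_mem_Icc.2 (by linarith)) ⟨h0.le, h1.le⟩ h0
  simp only [Real.sin_zero, Real.cos_zero, mul_zero, zero_mul, sub_zero, mul_comm] at this
  norm_num at this
  linarith


/-- Lemma A.2, part 1: `T_τ(y) ≤ y e^{y²/(2σ²)} f(τ)` with `f(τ) < (2/3)τ/(1+τ) ≤ (2/3)τ`. -/
theorem hsT_upper_bound_one (σ τ : ℝ) (hσ : 0 < σ) (hτ : τ ∈ Set.Ioo (0:ℝ) 1) :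
    (∀ y : ℝ, 0 < y →
      hsT σ τ y ≤ y * Real.exp (y ^ 2 / (2 * σ ^ 2)) *
        (τ / (1 - τ ^ 2) *
          (Real.sqrt (1 - τ ^ 2) / Real.arctan (Real.sqrt (1 - τ ^ 2) / τ) - τ))) ∧
    (τ / (1 - τ ^ 2) *
        (Real.sqrt (1 - τ ^ 2) / Real.arctan (Real.sqrt (1 - τ ^ 2) / τ) - τ) <
      2 / 3 * (τ / (1 + τ))) ∧
    (2 / 3 * (τ / (1 + τ)) ≤ 2 / 3 * τ) ∧
    (∀ y : ℝ, 0 < y →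
      hsT σ τ y ≤ 2 / 3 * τ * y * Real.exp (y ^ 2 / (2 * σ ^ 2))) := by
  obtain ⟨hτ0, hτ1⟩ := hτ
  have hs2 : (0:ℝ) < 1 - τ ^ 2 := by nlinarith
  set s := Real.sqrt (1 - τ ^ 2) with hs
  have hs0 : 0 < s := Real.sqrt_pos.2 hs2
  set A := Real.arctan (s / τ) with hA
  have hAarccos : Real.arccos τ = A := Real.arccos_eq_arctan hτ0
  have hθ0 : 0 < A := by rw [← hAarccos]; exact Real.arccos_pos.2 hτ1
  set f : ℝ := τ / (1 - τ ^ 2) * (s / A - τ) with hf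
  -- Shafer inequality
  have shaf : 3 * s < A * (2 + τ) := by
    have h1 : Real.arccos τ < π / 2 := Real.arccos_lt_pi_div_two.2 hτ0
    have h2 : 0 < Real.arccos τ := Real.arccos_pos.2 hτ1
    have h3 := shafer_trig h2 h1
    rw [Real.sin_arccos, Real.cos_arccos (by linarith) (by linarith), hAarccos] at h3
    rw [hs]
    linarith
  -- part 2
  have part2 : f < 2 / 3 * (τ / (1 + τ)) := by
    have h1 : s / A < (2 + τ) / 3 := by
      rw [div_lt_div_iff₀ hθ0 (by norm_num)]
      linarith
    have h2 : f < τ / (1 - τ ^ 2) * ((2 + τ) / 3 - τ) :=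
      mul_lt_mul_of_pos_left (by linarith) (by positivity)
    have h3 : τ / (1 - τ ^ 2) * ((2 + τ) / 3 - τ) = 2 / 3 * (τ / (1 + τ)) := by
      have h1τ : (1:ℝ) + τ ≠ 0 := by positivity
      field_simp
      ring
    linarith
  -- part 3
  have part3 : 2 / 3 * (τ / (1 + τ)) ≤ 2 / 3 * τ := by
    have : τ / (1 + τ) ≤ τ := div_le_self hτ0.le (by linarith)
    linarith
  -- evaluations
  have hJneg : hsI σ τ (-(1/2)) 0 = 2 / (τ * s) * A := hsI_zero_neg σ τ hσ hτ0 hτ1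
  have hJpos : hsI σ τ (1/2) 0 = 2 / (1 - τ ^ 2) * (1 - τ / s * A) := hsI_zero_pos σ τ hσ hτ0 hτ1
  have hJneg_pos : 0 < hsI σ τ (-(1/2)) 0 := by
    rw [hJneg]; exact mul_pos (by positivity) hθ0
  have hfJ : hsI σ τ (1/2) 0 = f * hsI σ τ (-(1/2)) 0 := by
    rw [hJneg, hJpos, hf]
    field_simp
  -- part 1
  have part1 : ∀ y : ℝ, 0 < y →
      hsT σ τ y ≤ y * Real.exp (y ^ 2 / (2 * σ ^ 2)) * f := by
    intro y hy
    set c := Real.exp (y ^ 2 / (2 * σ ^ 2)) with hc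
    have hc1 : (0:ℝ) < c := Real.exp_pos _
    have hIle : hsI σ τ (1/2) y ≤ c * hsI σ τ (1/2) 0 := by
      rw [hsI, hsI, ← intervalIntegral.integral_const_mul]
      apply intervalIntegral.integral_mono_on (by norm_num)
        (hsI_intble σ τ (1/2) y hσ hτ0 hτ1 (by norm_num))
        ((hsI_intble σ τ (1/2) 0 hσ hτ0 hτ1 (by norm_num)).const_mul c)
      intro z hz
      have hz0 : (0:ℝ) ≤ z := hz.1
      have hz1 : z ≤ 1 := hz.2
      have hzk : (0:ℝ) ≤ z ^ ((1/2):ℝ) := Real.rpow_nonneg hz0 _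
      have hD : (0:ℝ) ≤ (τ ^ 2 + (1 - τ ^ 2) * z)⁻¹ := by positivity
      have he : Real.exp (y ^ 2 * z / (2 * σ ^ 2)) ≤ c := by
        rw [hc]
        apply Real.exp_le_exp.2
        rw [div_le_div_iff₀ (by positivity) (by positivity)]
        nlinarith [mul_nonneg (mul_nonneg (sq_nonneg y) (by linarith : (0:ℝ) ≤ 1 - z))
          (by positivity : (0:ℝ) ≤ 2 * σ ^ 2)]
      calc z ^ ((1/2):ℝ) * (τ ^ 2 + (1 - τ ^ 2) * z)⁻¹ * Real.exp (y ^ 2 * z / (2 * σ ^ 2))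
          ≤ z ^ ((1/2):ℝ) * (τ ^ 2 + (1 - τ ^ 2) * z)⁻¹ * c :=
            mul_le_mul_of_nonneg_left he (mul_nonneg hzk hD)
        _ = c * (z ^ ((1/2):ℝ) * (τ ^ 2 + (1 - τ ^ 2) * z)⁻¹ * Real.exp (0 ^ 2 * z / (2 * σ ^ 2))) := by
            norm_num; ring
    have hIge : hsI σ τ (-(1/2)) 0 ≤ hsI σ τ (-(1/2)) y := by
      rw [hsI, hsI]
      apply intervalIntegral.integral_mono_on (by norm_num)
        (hsI_intble σ τ (-(1/2)) 0 hσ hτ0 hτ1 (by norm_num))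
        (hsI_intble σ τ (-(1/2)) y hσ hτ0 hτ1 (by norm_num))
      intro z hz
      have hz0 : (0:ℝ) ≤ z := hz.1
      have hzk : (0:ℝ) ≤ z ^ ((-(1/2)):ℝ) := Real.rpow_nonneg hz0 _
      have hD : (0:ℝ) ≤ (τ ^ 2 + (1 - τ ^ 2) * z)⁻¹ := by positivity
      have he : Real.exp (0 ^ 2 * z / (2 * σ ^ 2)) ≤ Real.exp (y ^ 2 * z / (2 * σ ^ 2)) := by
        apply Real.exp_le_exp.2
        have : (0:ℝ) ≤ y ^ 2 * z / (2 * σ ^ 2) := by positivity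
        norm_num
        linarith
      exact mul_le_mul_of_nonneg_left he (mul_nonneg hzk hD)
    have hInum : (0:ℝ) ≤ hsI σ τ (1/2) y := by
      rw [hsI]
      apply intervalIntegral.integral_nonneg (by norm_num)
      intro z hz
      have hz0 : (0:ℝ) ≤ z := hz.1
      have hzk : (0:ℝ) ≤ z ^ ((1/2):ℝ) := Real.rpow_nonneg hz0 _
      have hD : (0:ℝ) ≤ (τ ^ 2 + (1 - τ ^ 2) * z)⁻¹ := by positivity
      positivity
    have hJpos_nonneg : (0:ℝ) ≤ hsI σ τ (1/2) 0 := by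
      rw [hsI]
      apply intervalIntegral.integral_nonneg (by norm_num)
      intro z hz
      have hz0 : (0:ℝ) ≤ z := hz.1
      have hzk : (0:ℝ) ≤ z ^ ((1/2):ℝ) := Real.rpow_nonneg hz0 _
      have hD : (0:ℝ) ≤ (τ ^ 2 + (1 - τ ^ 2) * z)⁻¹ := by positivity
      positivity
    have hIden : 0 < hsI σ τ (-(1/2)) y := lt_of_lt_of_le hJneg_pos hIge
    rw [hsT]
    calc y * hsI σ τ (1/2) y / hsI σ τ (-(1/2)) y
        ≤ y * (c * hsI σ τ (1/2) 0) / hsI σ τ (-(1/2)) 0 := by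
          apply div_le_div₀ (by positivity)
            (mul_le_mul_of_nonneg_left hIle hy.le) hJneg_pos hIge
      _ = y * c * f := by
          rw [hfJ, show y * (c * (f * hsI σ τ (-(1/2)) 0)) = y * c * f * hsI σ τ (-(1/2)) 0 by ring,
            mul_div_assoc, div_self hJneg_pos.ne', mul_one]
  exact ⟨part1, part2, part3, fun y hy => by
    have h1 := part1 y hy
    have h2 : f ≤ 2 / 3 * τ := le_trans part2.le part3
    have he : (0:ℝ) < Real.exp (y ^ 2 / (2 * σ ^ 2)) := Real.exp_pos _
    calc hsT σ τ y ≤ y * Real.exp (y ^ 2 / (2 * σ ^ 2)) * f := h1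
      _ ≤ y * Real.exp (y ^ 2 / (2 * σ ^ 2)) * (2 / 3 * τ) :=
          mul_le_mul_of_nonneg_left h2 (by positivity)
      _ = 2 / 3 * τ * y * Real.exp (y ^ 2 / (2 * σ ^ 2)) := by ring⟩
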